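/- Let m ≥ 4 with m ≡ 2 (mod 8). Then the bent functions f_{0,3} and f_{1,2} are anti-self-dual: for f ∈ {f_{0,3}, f_{1,2}} and every y ∈ F_2^m, ∑_{x ∈ F_2^m} (-1)^{f(x) + x·y} = -2^{m/2} · (-1)^{f(y)}. -/

import Mathlib

open Finset

/-- Hamming weight of a vector of `F₂^m`. -/
def wt {m : ℕ} (x : Fin m → ZMod 2) : ℕ :=
  (Finset.univ.filter (fun i => x i = 1)).card

/-- The Boolean function `f_{i₁,i₂}` : value `1` iff `wt x ≡ i₁ or i₂ (mod 4)`. -/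
def bf (i₁ i₂ : ℕ) {m : ℕ} (x : Fin m → ZMod 2) : ZMod 2 :=
  if wt x % 4 = i₁ ∨ wt x % 4 = i₂ then 1 else 0

/-- Inner product over `F₂`. -/
def dot {m : ℕ} (a x : Fin m → ZMod 2) : ZMod 2 := ∑ i, a i * x i

namespace ASD

abbrev gI : GaussianInt := Zsqrtd.sqrtd

def chi (a : ZMod 2) : ℤ := (-1) ^ a.val

lemma chi_add (a b : ZMod 2) : chi (a + b) = chi a * chi b := by revert a b; decide

lemma wt_eq_sum {m : ℕ} (x : Fin m → ZMod 2) : wt x = ∑ i, (x i).val := by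
  rw [wt, Finset.card_filter]
  exact Finset.sum_congr rfl fun i _ => by
    have h : ∀ a : ZMod 2, (if a = 1 then (1:ℕ) else 0) = a.val := by decide
    exact h (x i)

lemma wt_cons {m : ℕ} (b : ZMod 2) (x : Fin m → ZMod 2) :
    wt (Fin.cons b x) = b.val + wt x := by
  rw [wt_eq_sum, wt_eq_sum, Fin.sum_univ_succ, Fin.cons_zero]
  simp [Fin.cons_succ]

lemma dot_cons {m : ℕ} (b : ZMod 2) (x : Fin m → ZMod 2) (y : Fin (m+1) → ZMod 2) :
    dot (Fin.cons b x) y = b * y 0 + dot x (Fin.tail y) := by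
  rw [dot, Fin.sum_univ_succ, Fin.cons_zero]
  simp [dot, Fin.cons_succ, Fin.tail]

lemma sum_pi_succ {R : Type*} [AddCommMonoid R] {m : ℕ} (F : (Fin (m+1) → ZMod 2) → R) :
    ∑ x : Fin (m+1) → ZMod 2, F x
      = ∑ b : ZMod 2, ∑ x : Fin m → ZMod 2, F (Fin.cons b x) := by
  have e := Fintype.sum_equiv (Fin.consEquiv fun _ => ZMod 2)
    (fun p => F (Fin.cons p.1 p.2)) F (fun p => rfl)
  rw [← e, Fintype.sum_prod_type]

lemma key : ∀ (m : ℕ) (y : Fin m → ZMod 2),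
    ∑ x : Fin m → ZMod 2, gI ^ wt x * ((chi (dot x y) : ℤ) : GaussianInt)
      = ∏ i, (1 + gI * ((chi (y i) : ℤ) : GaussianInt)) := by
  intro m
  induction m with
  | zero =>
      intro y
      simp [wt, dot, chi]
  | succ n ih =>
      intro y
      rw [sum_pi_succ, Fin.prod_univ_succ]
      have step : ∀ (b : ZMod 2) (x : Fin n → ZMod 2),
          gI ^ wt (Fin.cons b x) * ((chi (dot (Fin.cons b x) y) : ℤ) : GaussianInt)
            = (gI ^ b.val * ((chi (b * y 0) : ℤ) : GaussianInt))
              * (gI ^ wt x * ((chi (dot x (Fin.tail y)) : ℤ) : GaussianInt)) := by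
        intro b x
        rw [wt_cons, dot_cons, chi_add, pow_add]
        push_cast
        ring
      calc ∑ b : ZMod 2, ∑ x : Fin n → ZMod 2,
              gI ^ wt (Fin.cons b x) * ((chi (dot (Fin.cons b x) y) : ℤ) : GaussianInt)
          = ∑ b : ZMod 2, ∑ x : Fin n → ZMod 2,
              (gI ^ b.val * ((chi (b * y 0) : ℤ) : GaussianInt))
                * (gI ^ wt x * ((chi (dot x (Fin.tail y)) : ℤ) : GaussianInt)) := by
            exact Finset.sum_congr rfl fun b _ =>
              Finset.sum_congr rfl fun x _ => step b x
        _ = (∑ b : ZMod 2, gI ^ b.val * ((chi (b * y 0) : ℤ) : GaussianInt))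
              * ∑ x : Fin n → ZMod 2,
                  gI ^ wt x * ((chi (dot x (Fin.tail y)) : ℤ) : GaussianInt) := by
            rw [Finset.sum_mul_sum]
        _ = (1 + gI * ((chi (y 0) : ℤ) : GaussianInt))
              * ∏ i : Fin n, (1 + gI * ((chi (Fin.tail y i) : ℤ) : GaussianInt)) := by
            rw [ih (Fin.tail y)]
            congr 1
            have h : ∀ c : ZMod 2,
                ∑ b : ZMod 2, gI ^ b.val * ((chi (b * c) : ℤ) : GaussianInt)
                  = 1 + gI * ((chi c : ℤ) : GaussianInt) := by decide
            exact h (y 0)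
        _ = (1 + gI * ((chi (y 0) : ℤ) : GaussianInt))
              * ∏ i : Fin n, (1 + gI * ((chi (y i.succ) : ℤ) : GaussianInt)) := rfl

lemma prod_eval {m : ℕ} (y : Fin m → ZMod 2) :
    ∏ i, (1 + gI * ((chi (y i) : ℤ) : GaussianInt)) = (1 + gI) ^ m * (-gI) ^ wt y := by
  have h : ∀ c : ZMod 2, 1 + gI * ((chi c : ℤ) : GaussianInt) = (1 + gI) * (-gI) ^ c.val := by
    decide
  calc ∏ i, (1 + gI * ((chi (y i) : ℤ) : GaussianInt))
      = ∏ i, ((1 + gI) * (-gI) ^ (y i).val) :=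
        Finset.prod_congr rfl fun i _ => h (y i)
    _ = (1 + gI) ^ m * (-gI) ^ wt y := by
        rw [Finset.prod_mul_distrib, Finset.prod_const, Finset.prod_pow_eq_pow_sum,
          wt_eq_sum, Finset.card_univ, Fintype.card_fin]

lemma pow_mod4 (z : GaussianInt) (h4 : z ^ 4 = 1) (n : ℕ) : z ^ n = z ^ (n % 4) := by
  conv_lhs => rw [show n = 4 * (n / 4) + n % 4 by omega]
  rw [pow_add, pow_mul, h4, one_pow, one_mul]

lemma Teval (m : ℕ) (h8 : m % 8 = 2) {y : Fin m → ZMod 2} :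
    ∑ x : Fin m → ZMod 2, gI ^ wt x * ((chi (dot x y) : ℤ) : GaussianInt)
      = ((2 ^ (m / 2) : ℤ) : GaussianInt) * (gI * (-gI) ^ (wt y % 4)) := by
  rw [key, prod_eval, ← pow_mod4 (-gI) (by decide) (wt y)]
  have h2 : (1 + gI) ^ 2 = 2 * gI := by decide
  have hm : m = 2 * (m / 2) := by omega
  have hs : m / 2 % 4 = 1 := by omega
  have h1m : (1 + gI) ^ m = ((2 ^ (m / 2) : ℤ) : GaussianInt) * gI := by
    calc (1 + gI) ^ m = ((1 + gI) ^ 2) ^ (m / 2) := by rw [← pow_mul, ← hm]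
      _ = 2 ^ (m / 2) * gI ^ (m / 2) := by rw [h2, mul_pow]
      _ = ((2 ^ (m / 2) : ℤ) : GaussianInt) * gI := by
          rw [pow_mod4 gI (by decide) (m / 2), hs, pow_one]
          norm_cast
  rw [h1m, mul_assoc]

def reH : GaussianInt →+ ℤ where
  toFun := Zsqrtd.re
  map_zero' := rfl
  map_add' := fun _ _ => rfl

def imH : GaussianInt →+ ℤ where
  toFun := Zsqrtd.im
  map_zero' := rfl
  map_add' := fun _ _ => rfl

lemma mul_cast_re (z : GaussianInt) (n : ℤ) : (z * ((n : ℤ) : GaussianInt)).re = z.re * n := by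
  simp [Zsqrtd.re_mul]

lemma mul_cast_im (z : GaussianInt) (n : ℤ) : (z * ((n : ℤ) : GaussianInt)).im = z.im * n := by
  simp [Zsqrtd.im_mul]

lemma cast_mul_re (n : ℤ) (z : GaussianInt) : (((n : ℤ) : GaussianInt) * z).re = n * z.re := by
  simp [Zsqrtd.re_mul]

lemma cast_mul_im (n : ℤ) (z : GaussianInt) : (((n : ℤ) : GaussianInt) * z).im = n * z.im := by
  simp [Zsqrtd.im_mul]

lemma two_pow_re (s : ℕ) : ((2 : GaussianInt) ^ s).re = 2 ^ s := by
  have h : (2 : GaussianInt) ^ s = ((2 ^ s : ℤ) : GaussianInt) := by push_cast; ring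
  rw [h, Zsqrtd.re_intCast]

lemma two_pow_im (s : ℕ) : ((2 : GaussianInt) ^ s).im = 0 := by
  have h : (2 : GaussianInt) ^ s = ((2 ^ s : ℤ) : GaussianInt) := by push_cast; ring
  rw [h, Zsqrtd.im_intCast]

lemma gre : (gI : GaussianInt).re = 0 := rfl
lemma gim : (gI : GaussianInt).im = 1 := rfl

lemma sgn03 (n : ℕ) :
    (-1 : ℤ) ^ ((if n % 4 = 0 ∨ n % 4 = 3 then (1 : ZMod 2) else 0)).val
      = (gI ^ n).im - (gI ^ n).re := by
  rw [pow_mod4 gI (by decide) n]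
  have h : n % 4 < 4 := Nat.mod_lt _ (by norm_num)
  set r := n % 4 with hr
  interval_cases r <;> decide

lemma sgn12 (n : ℕ) :
    (-1 : ℤ) ^ ((if n % 4 = 1 ∨ n % 4 = 2 then (1 : ZMod 2) else 0)).val
      = (gI ^ n).re - (gI ^ n).im := by
  rw [pow_mod4 gI (by decide) n]
  have h : n % 4 < 4 := Nat.mod_lt _ (by norm_num)
  set r := n % 4 with hr
  interval_cases r <;> decide

lemma chi_add' (a b : ZMod 2) :
    (-1 : ℤ) ^ ((a + b).val) = (-1 : ℤ) ^ a.val * (-1 : ℤ) ^ b.val := by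
  revert a b; decide

end ASD

open ASD
theorem stmt_14 (m : ℕ) (hm : 4 ≤ m) (h8 : m % 8 = 2) :
    ∀ f ∈ ({@bf 0 3 m, @bf 1 2 m} : Set ((Fin m → ZMod 2) → ZMod 2)),
      ∀ y : Fin m → ZMod 2,
        (∑ x : Fin m → ZMod 2, (-1 : ℤ) ^ (f x + dot x y).val)
          = -(2 ^ (m / 2)) * (-1 : ℤ) ^ (f y).val := by
  intro f hf y
  have hre : ∑ x : Fin m → ZMod 2, (gI ^ wt x).re * chi (dot x y)
      = (∑ x : Fin m → ZMod 2, gI ^ wt x * ((chi (dot x y) : ℤ) : GaussianInt)).re := by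
    rw [show (∑ x : Fin m → ZMod 2, gI ^ wt x * ((chi (dot x y) : ℤ) : GaussianInt)).re
        = reH (∑ x : Fin m → ZMod 2, gI ^ wt x * ((chi (dot x y) : ℤ) : GaussianInt)) from rfl,
      map_sum]
    exact Finset.sum_congr rfl fun x _ => (mul_cast_re _ _).symm
  have him : ∑ x : Fin m → ZMod 2, (gI ^ wt x).im * chi (dot x y)
      = (∑ x : Fin m → ZMod 2, gI ^ wt x * ((chi (dot x y) : ℤ) : GaussianInt)).im := by
    rw [show (∑ x : Fin m → ZMod 2, gI ^ wt x * ((chi (dot x y) : ℤ) : GaussianInt)).im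
        = imH (∑ x : Fin m → ZMod 2, gI ^ wt x * ((chi (dot x y) : ℤ) : GaussianInt)) from rfl,
      map_sum]
    exact Finset.sum_congr rfl fun x _ => (mul_cast_im _ _).symm
  have hT := Teval m h8 (y := y)
  have hwlt : wt y % 4 < 4 := Nat.mod_lt _ (by norm_num)
  simp only [Set.mem_insert_iff, Set.mem_singleton_iff] at hf
  rcases hf with hf | hf <;> subst hf <;> simp only [bf]
  · -- f = bf 0 3
    calc ∑ x : Fin m → ZMod 2,
            (-1 : ℤ) ^ (((if wt x % 4 = 0 ∨ wt x % 4 = 3 then (1 : ZMod 2) else 0) + dot x y).val)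
        = ∑ x : Fin m → ZMod 2, ((gI ^ wt x).im - (gI ^ wt x).re) * chi (dot x y) := by
          refine Finset.sum_congr rfl fun x _ => ?_
          rw [chi_add', sgn03]; rfl
      _ = (∑ x : Fin m → ZMod 2, gI ^ wt x * ((chi (dot x y) : ℤ) : GaussianInt)).im
            - (∑ x : Fin m → ZMod 2, gI ^ wt x * ((chi (dot x y) : ℤ) : GaussianInt)).re := by
          rw [← hre, ← him, ← Finset.sum_sub_distrib]
          exact Finset.sum_congr rfl fun x _ => by ring
      _ = -(2 ^ (m / 2)) * (-1 : ℤ) ^ ((if wt y % 4 = 0 ∨ wt y % 4 = 3 then (1 : ZMod 2) else 0)).val := by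
          rw [hT]
          set r := wt y % 4 with hr
          interval_cases r <;>
            (simp [cast_mul_re, cast_mul_im, Zsqrtd.re_mul, Zsqrtd.im_mul,
              Zsqrtd.re_neg, Zsqrtd.im_neg, Zsqrtd.re_one, Zsqrtd.im_one,
              pow_succ, pow_zero, two_pow_re, two_pow_im, gre, gim,
              show ((1 : ZMod 2)).val = 1 from rfl]; try ring)
  · -- f = bf 1 2
    calc ∑ x : Fin m → ZMod 2,
            (-1 : ℤ) ^ (((if wt x % 4 = 1 ∨ wt x % 4 = 2 then (1 : ZMod 2) else 0) + dot x y).val)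
        = ∑ x : Fin m → ZMod 2, ((gI ^ wt x).re - (gI ^ wt x).im) * chi (dot x y) := by
          refine Finset.sum_congr rfl fun x _ => ?_
          rw [chi_add', sgn12]; rfl
      _ = (∑ x : Fin m → ZMod 2, gI ^ wt x * ((chi (dot x y) : ℤ) : GaussianInt)).re
            - (∑ x : Fin m → ZMod 2, gI ^ wt x * ((chi (dot x y) : ℤ) : GaussianInt)).im := by
          rw [← hre, ← him, ← Finset.sum_sub_distrib]
          exact Finset.sum_congr rfl fun x _ => by ring
      _ = -(2 ^ (m / 2)) * (-1 : ℤ) ^ ((if wt y % 4 = 1 ∨ wt y % 4 = 2 then (1 : ZMod 2) else 0)).val := by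
          rw [hT]
          set r := wt y % 4 with hr
          interval_cases r <;>
            (simp [cast_mul_re, cast_mul_im, Zsqrtd.re_mul, Zsqrtd.im_mul,
              Zsqrtd.re_neg, Zsqrtd.im_neg, Zsqrtd.re_one, Zsqrtd.im_one,
              pow_succ, pow_zero, two_pow_re, two_pow_im, gre, gim,
              show ((1 : ZMod 2)).val = 1 from rfl]; try ring)
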